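/- Let 1 ≤ p ≤ q with gcd(p,q) = 1, and let Λ(p,q) be the lattice generated by ℤ³ together with the point (1/q, −1/q, p/q). Then Λ(p,q) is a lattice containing ℤ³ with index q, the standard tetrahedron T₀ = conv{(0,0,0), (1,0,0), (0,1,0), (0,0,1)} contains no points of Λ(p,q) other than its vertices, and there is a lattice isomorphism Λ(p,q) → ℤ³ sending T₀ to T(p,q) = conv{(0,0,0), (1,0,0), (0,0,1), (p,q,1)}. -/

import Mathlib

/-- The lattice ℤ³ as an additive subgroup of ℝ³. -/
def ZL3 : AddSubgroup (Fin 3 → ℝ) :=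
  AddSubgroup.closure (Set.range fun z : Fin 3 → ℤ => fun i => (z i : ℝ))

/-- The lattice Λ(p,q) = ℤ·(1/q, −1/q, p/q) + ℤ³. -/
def Lam (p q : ℕ) : AddSubgroup (Fin 3 → ℝ) :=
  ZL3 ⊔ AddSubgroup.closure {![(1 : ℝ)/q, -(1 : ℝ)/q, (p : ℝ)/q]}

def castHom3 : (Fin 3 → ℤ) →+ (Fin 3 → ℝ) where
  toFun z i := (z i : ℝ)
  map_zero' := by funext i; simp
  map_add' a b := by funext i; push_cast; simp

lemma ZL3_eq_range : ZL3 = castHom3.range := by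
  have h : (Set.range fun z : Fin 3 → ℤ => fun i => (z i : ℝ))
      = (castHom3.range : Set (Fin 3 → ℝ)) := by
    rw [AddMonoidHom.coe_range]; rfl
  rw [ZL3, h, AddSubgroup.closure_eq]

lemma mem_ZL3 {x : Fin 3 → ℝ} : x ∈ ZL3 ↔ ∃ z : Fin 3 → ℤ, (fun i => (z i : ℝ)) = x := by
  rw [ZL3_eq_range]; exact Iff.rfl

lemma mem_Lam {p q : ℕ} {x : Fin 3 → ℝ} :
    x ∈ Lam p q ↔ ∃ (z : Fin 3 → ℤ) (k : ℤ),
      x = (fun i => (z i : ℝ)) + k • ![(1 : ℝ)/q, -(1 : ℝ)/q, (p : ℝ)/q] := by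
  rw [Lam, AddSubgroup.mem_sup]
  constructor
  · rintro ⟨y, hy, w, hw, rfl⟩
    obtain ⟨z, rfl⟩ := mem_ZL3.mp hy
    obtain ⟨k, rfl⟩ := AddSubgroup.mem_closure_singleton.mp hw
    exact ⟨z, k, rfl⟩
  · rintro ⟨z, k, rfl⟩
    exact ⟨_, mem_ZL3.mpr ⟨z, rfl⟩, _, AddSubgroup.mem_closure_singleton.mpr ⟨k, rfl⟩, rfl⟩

lemma coord_int {p q : ℕ} (hq : (q:ℝ) ≠ 0) {x : Fin 3 → ℝ} (hx : x ∈ Lam p q) :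
    ∃ n : ℤ, (q:ℝ) * x 0 = n := by
  obtain ⟨z, k, rfl⟩ := mem_Lam.mp hx
  refine ⟨q * z 0 + k, ?_⟩
  simp only [Pi.add_apply, Pi.smul_apply, Pi.mul_apply, Pi.intCast_apply, zsmul_eq_mul, Matrix.cons_val_zero]
  push_cast
  field_simp

lemma index_eq (p q : ℕ) (hp : 1 ≤ p) (hpq : p ≤ q) :
    (ZL3.addSubgroupOf (Lam p q)).index = q := by
  have hq1 : 1 ≤ q := le_trans hp hpq
  haveI : NeZero q := ⟨by omega⟩
  have hq : (q:ℝ) ≠ 0 := Nat.cast_ne_zero.mpr (by omega)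
  set g : (Lam p q) →+ ZMod q :=
    { toFun := fun x => ((round ((q:ℝ) * (x : Fin 3 → ℝ) 0) : ℤ) : ZMod q),
      map_zero' := by simp
      map_add' := by
        rintro x y
        obtain ⟨m, hm⟩ := coord_int hq x.2
        obtain ⟨n, hn⟩ := coord_int hq y.2
        have hxy : (q:ℝ) * ((x + y : Lam p q) : Fin 3 → ℝ) 0 = ((m + n : ℤ) : ℝ) := by
          push_cast
          simp only [AddSubgroup.coe_add, Pi.add_apply]
          rw [mul_add, hm, hn]
        simp only [hxy, hm, hn, round_intCast]
        push_cast
        ring } with hg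
  have hv : ![(1 : ℝ)/q, -(1 : ℝ)/q, (p : ℝ)/q] ∈ Lam p q :=
    mem_Lam.mpr ⟨0, 1, by funext i; simp⟩
  have hker : g.ker = ZL3.addSubgroupOf (Lam p q) := by
    ext x
    rw [AddMonoidHom.mem_ker, AddSubgroup.mem_addSubgroupOf]
    obtain ⟨z, k, hzk⟩ := mem_Lam.mp x.2
    have hx0 : (q:ℝ) * (x : Fin 3 → ℝ) 0 = ((q * z 0 + k : ℤ) : ℝ) := by
      rw [hzk]
      simp only [Pi.add_apply, Pi.smul_apply, Pi.mul_apply, Pi.intCast_apply, zsmul_eq_mul, Matrix.cons_val_zero]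
      push_cast
      field_simp
    have hgx : g x = ((q * z 0 + k : ℤ) : ZMod q) := by
      simp only [hg, AddMonoidHom.coe_mk, ZeroHom.coe_mk, hx0, round_intCast]
    constructor
    · intro h
      rw [hgx, ZMod.intCast_zmod_eq_zero_iff_dvd] at h
      have hk : (q:ℤ) ∣ k := (dvd_add_right ⟨z 0, by ring⟩).mp h
      obtain ⟨t, rfl⟩ := hk
      refine mem_ZL3.mpr ⟨![z 0 + t, z 1 - t, z 2 + t * p], ?_⟩
      rw [hzk]
      funext i
      fin_cases i <;>
        · simp only [Pi.add_apply, Pi.smul_apply, Pi.mul_apply, Pi.intCast_apply, zsmul_eq_mul, Matrix.cons_val_zero,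
            Matrix.cons_val_one, Matrix.head_cons, Matrix.cons_val_two, Matrix.tail_cons]
          push_cast
          field_simp
          try ring
    · intro h
      obtain ⟨z', hz'⟩ := mem_ZL3.mp h
      have : (q:ℝ) * (x : Fin 3 → ℝ) 0 = ((q * z' 0 : ℤ) : ℝ) := by
        rw [← hz']
        push_cast
        ring
      simp only [hg, AddMonoidHom.coe_mk, ZeroHom.coe_mk, this, round_intCast]
      rw [ZMod.intCast_zmod_eq_zero_iff_dvd]
      exact ⟨z' 0, rfl⟩
  have hsurj : Function.Surjective g := by
    intro c
    refine ⟨(c.val : ℤ) • ⟨_, hv⟩, ?_⟩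
    have hcoord : (q:ℝ) * (((c.val : ℤ) • (⟨_, hv⟩ : Lam p q) : Lam p q) : Fin 3 → ℝ) 0
        = (((c.val : ℕ) : ℤ) : ℝ) := by
      show (q:ℝ) * ((c.val : ℤ) • ![(1 : ℝ)/q, -(1 : ℝ)/q, (p : ℝ)/q]) 0 = _
      simp only [Pi.smul_apply, Pi.mul_apply, Pi.intCast_apply, zsmul_eq_mul, Matrix.cons_val_zero]
      push_cast
      field_simp
    have : g ((c.val : ℤ) • (⟨_, hv⟩ : Lam p q)) = (((c.val : ℕ) : ℤ) : ZMod q) := by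
      simp only [hg, AddMonoidHom.coe_mk, ZeroHom.coe_mk, hcoord, round_intCast]
    rw [this]
    push_cast
    exact ZMod.natCast_rightInverse c
  rw [← hker, AddSubgroup.index_ker]
  rw [AddMonoidHom.range_eq_top.mpr hsurj]
  rw [Nat.card_congr AddSubgroup.topEquiv.toEquiv, Nat.card_zmod]

lemma hull_subset :
    convexHull ℝ ({![0,0,0], ![1,0,0], ![0,1,0], ![0,0,1]} : Set (Fin 3 → ℝ)) ⊆
      {x | 0 ≤ x 0 ∧ 0 ≤ x 1 ∧ 0 ≤ x 2 ∧ x 0 + x 1 + x 2 ≤ 1} := by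
  apply convexHull_min
  · rintro x (rfl | rfl | rfl | rfl) <;> norm_num [Matrix.cons_val_two, Matrix.tail_cons, Matrix.head_cons]
  · rintro x ⟨hx0, hx1, hx2, hxs⟩ y ⟨hy0, hy1, hy2, hys⟩ a b ha hb hab
    simp only [Set.mem_setOf_eq, Pi.add_apply, Pi.smul_apply, smul_eq_mul]
    refine ⟨by nlinarith, by nlinarith, by nlinarith, by nlinarith⟩

lemma tetra_case (p q : ℕ) (hp : 1 ≤ p) (hpq : p ≤ q) (hgcd : Nat.gcd p q = 1)
    (w : Fin 3 → ℤ) (r : ℤ) (hr0 : 0 ≤ r) (hrq : r < q)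
    (x : Fin 3 → ℝ)
    (hx0 : x 0 = w 0 + r / q) (hx1 : x 1 = w 1 - r / q) (hx2 : x 2 = w 2 + p * r / q)
    (h0 : 0 ≤ x 0) (h1 : 0 ≤ x 1) (h2 : 0 ≤ x 2) (hs : x 0 + x 1 + x 2 ≤ 1) :
    x ∈ ({![0,0,0], ![1,0,0], ![0,1,0], ![0,0,1]} : Set (Fin 3 → ℝ)) := by
  have hq1 : 1 ≤ q := le_trans hp hpq
  have hqR : (0:ℝ) < q := by exact_mod_cast Nat.pos_of_ne_zero (by omega)
  rcases eq_or_lt_of_le hr0 with hr | hr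
  · have e0 : x 0 = (w 0 : ℝ) := by rw [hx0, ← hr]; ring
    have e1 : x 1 = (w 1 : ℝ) := by rw [hx1, ← hr]; ring
    have e2 : x 2 = (w 2 : ℝ) := by rw [hx2, ← hr]; ring
    have i0 : (0:ℤ) ≤ w 0 := by exact_mod_cast e0 ▸ h0
    have i1 : (0:ℤ) ≤ w 1 := by exact_mod_cast e1 ▸ h1
    have i2 : (0:ℤ) ≤ w 2 := by exact_mod_cast e2 ▸ h2
    have isum : w 0 + w 1 + w 2 ≤ 1 := by
      have := hs; rw [e0, e1, e2] at this; exact_mod_cast this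
    have hcases : (w 0 = 0 ∧ w 1 = 0 ∧ w 2 = 0) ∨ (w 0 = 1 ∧ w 1 = 0 ∧ w 2 = 0) ∨
        (w 0 = 0 ∧ w 1 = 1 ∧ w 2 = 0) ∨ (w 0 = 0 ∧ w 1 = 0 ∧ w 2 = 1) := by omega
    rcases hcases with ⟨a,b,c⟩ | ⟨a,b,c⟩ | ⟨a,b,c⟩ | ⟨a,b,c⟩
    · left; funext i; fin_cases i <;> simp [e0, e1, e2, a, b, c]
    · right; left; funext i; fin_cases i <;> simp [e0, e1, e2, a, b, c]
    · right; right; left; funext i; fin_cases i <;> simp [e0, e1, e2, a, b, c]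
    · right; right; right; funext i; fin_cases i <;> simp [e0, e1, e2, a, b, c]
  · exfalso
    have hrR : (0:ℝ) < r / q := div_pos (by exact_mod_cast hr) hqR
    have hrq' : (r:ℝ) < (q:ℝ) := by exact_mod_cast hrq
    have hrR1 : (r:ℝ) / q < 1 := (div_lt_one hqR).mpr hrq'
    have hw1 : 1 ≤ w 1 := by
      have h : (0:ℝ) < (w 1 : ℝ) := by rw [hx1] at h1; linarith
      have : (0:ℤ) < w 1 := by exact_mod_cast h
      omega
    have hw0 : 0 ≤ w 0 := by
      have : (-1:ℝ) < (w 0 : ℝ) := by rw [hx0] at h0; linarith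
      have := (by exact_mod_cast this : (-1:ℤ) < w 0); omega
    have hsum01 : (1:ℝ) ≤ x 0 + x 1 := by
      rw [hx0, hx1]
      have : (1:ℝ) ≤ (w 0 : ℝ) + (w 1 : ℝ) := by
        have : (1:ℤ) ≤ w 0 + w 1 := by omega
        exact_mod_cast this
      linarith
    have hx2z : x 2 = 0 := le_antisymm (by linarith) h2
    have key : (w 2 * q + p * r : ℤ) = 0 := by
      have : (w 2 : ℝ) * q + p * r = 0 := by
        rw [hx2] at hx2z
        field_simp at hx2z
        linarith
      exact_mod_cast this
    have hdvd : (q:ℤ) ∣ (p:ℤ) * r := ⟨-(w 2), by linarith [key]⟩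
    have hcop : IsCoprime (q:ℤ) (p:ℤ) := by
      rw [Int.isCoprime_iff_gcd_eq_one]
      simpa [Int.gcd, Nat.gcd_comm] using hgcd
    have : (q:ℤ) ∣ r := hcop.dvd_of_dvd_mul_left hdvd
    have := Int.le_of_dvd hr this
    omega

noncomputable def phiEquiv (p q : ℕ) (hq : (q : ℝ) ≠ 0) : (Fin 3 → ℝ) ≃ₗ[ℝ] (Fin 3 → ℝ) where
  toFun x := ![(p : ℝ) * x 1 + x 2, (q : ℝ) * x 1, x 0 + x 1]
  invFun y := ![-(y 1) / q + y 2, y 1 / q, y 0 - (p : ℝ) * y 1 / q]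
  map_add' a b := by funext i; fin_cases i <;> simp <;> ring
  map_smul' c a := by funext i; fin_cases i <;> simp <;> ring
  left_inv x := by funext i; fin_cases i <;> simp <;> field_simp <;> try ring
  right_inv y := by funext i; fin_cases i <;> simp <;> field_simp <;> try ring

/-- For 1 ≤ p ≤ q with gcd(p,q)=1: Λ(p,q) contains ℤ³ with index q, the standard
tetrahedron T₀ contains no points of Λ(p,q) other than its vertices, and some
affine isomorphism of ℝ³ maps Λ(p,q) onto ℤ³ sending T₀ to T(p,q). -/
theorem Lam_change_of_coordinates (p q : ℕ) (hp : 1 ≤ p) (hpq : p ≤ q)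
    (hgcd : Nat.gcd p q = 1) :
    ZL3 ≤ Lam p q ∧
    (ZL3.addSubgroupOf (Lam p q)).index = q ∧
    (∀ x ∈ Lam p q, x ∈ convexHull ℝ
        ({![0,0,0], ![1,0,0], ![0,1,0], ![0,0,1]} : Set (Fin 3 → ℝ)) →
      x ∈ ({![0,0,0], ![1,0,0], ![0,1,0], ![0,0,1]} : Set (Fin 3 → ℝ))) ∧
    (∃ φ : (Fin 3 → ℝ) ≃ᵃ[ℝ] (Fin 3 → ℝ),
      φ '' (Lam p q : Set (Fin 3 → ℝ)) = (ZL3 : Set (Fin 3 → ℝ)) ∧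
      φ '' ({![0,0,0], ![1,0,0], ![0,1,0], ![0,0,1]} : Set (Fin 3 → ℝ))
        = ({![0,0,0], ![1,0,0], ![0,0,1], ![(p : ℝ), (q : ℝ), 1]} : Set (Fin 3 → ℝ))) := by
  have hq1 : 1 ≤ q := le_trans hp hpq
  have hq : (q:ℝ) ≠ 0 := Nat.cast_ne_zero.mpr (by omega)
  have hqR : (0:ℝ) < q := by exact_mod_cast Nat.pos_of_ne_zero (by omega)
  refine ⟨le_sup_left, index_eq p q hp hpq, ?_, ?_⟩
  · -- empty tetrahedron
    intro x hx hhull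
    obtain ⟨hc0, hc1, hc2, hcs⟩ := hull_subset hhull
    obtain ⟨z, k, rfl⟩ := mem_Lam.mp hx
    set m : ℤ := k / (q:ℤ) with hm
    set r : ℤ := k % (q:ℤ) with hrdef
    have hqZ : (0:ℤ) < (q:ℤ) := by exact_mod_cast Nat.pos_of_ne_zero (by omega)
    have hr0 : 0 ≤ r := Int.emod_nonneg k (by omega)
    have hrq : r < (q:ℤ) := Int.emod_lt_of_pos k hqZ
    have hkR : (k:ℝ) = (q:ℝ) * m + r := by
      rw [hm, hrdef]
      exact_mod_cast (Int.mul_ediv_add_emod k (q:ℤ)).symm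
    set w : Fin 3 → ℤ := ![z 0 + m, z 1 - m, z 2 + m * p] with hw
    set x := (fun i => (z i : ℝ)) + k • ![(1 : ℝ)/q, -(1 : ℝ)/q, (p : ℝ)/q] with hxdef
    have hx0 : x 0 = (w 0 : ℝ) + r / q := by
      simp only [hxdef, hw, Pi.add_apply, Pi.smul_apply, Pi.mul_apply, Pi.intCast_apply, zsmul_eq_mul, Matrix.cons_val_zero]
      push_cast
      rw [hkR]; field_simp; ring
    have hx1 : x 1 = (w 1 : ℝ) - r / q := by
      simp only [hxdef, hw, Pi.add_apply, Pi.smul_apply, Pi.mul_apply, Pi.intCast_apply, zsmul_eq_mul,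
        Matrix.cons_val_one, Matrix.head_cons]
      push_cast
      rw [hkR]; field_simp; ring
    have hx2 : x 2 = (w 2 : ℝ) + p * r / q := by
      simp only [hxdef, hw, Pi.add_apply, Pi.smul_apply, Pi.mul_apply, Pi.intCast_apply, zsmul_eq_mul,
        Matrix.cons_val_two, Matrix.tail_cons, Matrix.head_cons]
      push_cast
      rw [hkR]; field_simp; ring
    exact tetra_case p q hp hpq hgcd w r hr0 hrq x hx0 hx1 hx2 hc0 hc1 hc2 hcs
  · -- the affine isomorphism
    refine ⟨(phiEquiv p q hq).toAffineEquiv, ?_, ?_⟩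
    · ext y
      constructor
      · rintro ⟨x, hx, rfl⟩
        obtain ⟨z, k, rfl⟩ := mem_Lam.mp hx
        refine mem_ZL3.mpr ⟨![p * z 1 + z 2, q * z 1 - k, z 0 + z 1], ?_⟩
        show _ = (phiEquiv p q hq) _
        funext i
        show _ = ![(p:ℝ) * _ + _, (q:ℝ) * _, _] i
        fin_cases i <;>
          · simp only [Pi.add_apply, Pi.smul_apply, Pi.mul_apply, Pi.intCast_apply, zsmul_eq_mul, Matrix.cons_val_zero,
              Matrix.cons_val_one, Matrix.head_cons, Matrix.cons_val_two, Matrix.tail_cons]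
            push_cast
            field_simp
            try ring
      · intro hy
        obtain ⟨z, hz⟩ := mem_ZL3.mp hy
        refine ⟨(fun i => (![z 2, 0, z 0] i : ℝ)) + (-(z 1)) • ![(1 : ℝ)/q, -(1 : ℝ)/q, (p : ℝ)/q],
          mem_Lam.mpr ⟨![z 2, 0, z 0], -(z 1), rfl⟩, ?_⟩
        rw [← hz]
        show (phiEquiv p q hq) _ = _
        funext i
        show ![(p:ℝ) * _ + _, (q:ℝ) * _, _] i = _
        fin_cases i <;>
          · simp only [Pi.add_apply, Pi.smul_apply, Pi.mul_apply, Pi.intCast_apply, zsmul_eq_mul, Matrix.cons_val_zero,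
              Matrix.cons_val_one, Matrix.head_cons, Matrix.cons_val_two, Matrix.tail_cons]
            push_cast
            field_simp
            try ring
    · have c1 : (phiEquiv p q hq).toAffineEquiv ![(0:ℝ),0,0] = ![(0:ℝ),0,0] := by
        show (![(p : ℝ) * _ + _, _, _] : Fin 3 → ℝ) = _
        funext i; fin_cases i <;> simp
      have c2 : (phiEquiv p q hq).toAffineEquiv ![(1:ℝ),0,0] = ![(0:ℝ),0,1] := by
        funext i; fin_cases i <;> simp [phiEquiv]
      have c3 : (phiEquiv p q hq).toAffineEquiv ![(0:ℝ),1,0] = ![(p:ℝ),(q:ℝ),1] := by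
        funext i; fin_cases i <;> simp [phiEquiv]
      have c4 : (phiEquiv p q hq).toAffineEquiv ![(0:ℝ),0,1] = ![(1:ℝ),0,0] := by
        funext i; fin_cases i <;> simp [phiEquiv]
      rw [Set.image_insert_eq, Set.image_insert_eq, Set.image_insert_eq, Set.image_singleton,
        c1, c2, c3, c4]
      ext y
      simp only [Set.mem_insert_iff, Set.mem_singleton_iff]
      tauto
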